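/- Let ∇_𝓕 be an adapted torsion-free connection on a foliated manifold (M,𝓕). Then the formula ∇(𝓕)_{[X]}[Y] := [∇_{𝓕,X} Y], for adapted vector fields X, Y, gives a well-defined bilinear operation on the quotient Lie algebra Vect(M,𝓕) = Vect_𝓕(M)/Γ(T𝓕); i.e. [∇_{𝓕,X} Y] depends only on the classes [X] and [Y] modulo Γ(T𝓕), and ∇_{𝓕,X}Y ∈ Vect_𝓕(M). -/
import Mathlib


/-- `X` is adapted to the foliation whose tangent fields form `T`. -/
def Adapted {V : Type*} [LieRing V] (T : AddSubgroup V) (X : V) : Prop :=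
  ∀ Z ∈ T, ⁅X, Z⁆ ∈ T

/-- an adapted torsion-free connection `D = ∇_𝓕` induces a well-defined
operation on the quotient `Vect(M,𝓕) = Vect_𝓕(M)/Γ(T𝓕)`: the value `∇_{𝓕,X}Y` is
adapted, and its class modulo `T` only depends on the classes of `X` and `Y`. -/
theorem stmt4 {V : Type*} [LieRing V] (T : AddSubgroup V)
    (hinv : ∀ X ∈ T, ∀ Y ∈ T, ⁅X, Y⁆ ∈ T)
    (D : V → V → V)
    (haddl : ∀ X X' Y : V, D (X + X') Y = D X Y + D X' Y)
    (haddr : ∀ X Y Y' : V, D X (Y + Y') = D X Y + D X Y')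
    (htf : ∀ X Y : V, D Y X = D X Y + ⁅Y, X⁆)
    (hAT : ∀ X Y : V, Adapted T X → Y ∈ T → D X Y ∈ T)
    (hAA : ∀ X Y : V, Adapted T X → Adapted T Y → Adapted T (D X Y)) :
    (∀ X Y : V, Adapted T X → Adapted T Y → Adapted T (D X Y)) ∧
    (∀ X X' Y Y' : V, Adapted T X → Adapted T X' → Adapted T Y → Adapted T Y' →
      X - X' ∈ T → Y - Y' ∈ T → D X Y - D X' Y' ∈ T) := by
  refine ⟨hAA, fun X X' Y Y' hX hX' hY hY' hXX hYY => ?_⟩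
  have hsubl : ∀ A B C : V, D (A - B) C = D A C - D B C := by
    intro A B C
    have h := haddl (A - B) B C
    rw [sub_add_cancel] at h
    exact eq_sub_of_add_eq h.symm
  have hsubr : ∀ A B C : V, D A (B - C) = D A B - D A C := by
    intro A B C
    have h := haddr A (B - C) C
    rw [sub_add_cancel] at h
    exact eq_sub_of_add_eq h.symm
  have key : D X Y - D X' Y' = D Y (X - X') + ⁅X - X', Y⁆ + D X' (Y - Y') := by
    rw [← htf, hsubl, hsubr]; abel
  rw [key]
  have h1 : D Y (X - X') ∈ T := hAT Y (X - X') hY hXX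
  have h2 : ⁅X - X', Y⁆ ∈ T := by
    have h := T.neg_mem (hY (X - X') hXX)
    rwa [← lie_skew]
  exact T.add_mem (T.add_mem h1 h2) (hAT X' (Y - Y') hX' hYY)
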